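/- arXiv:2003.12356 — 3 statements merged into one kernel-verified Lean document; each statement's English description precedes it below -/
import Mathlib

section
/- Define, for delays τ ∈ (ℝ₊)^m and a continuous function F : ℂ^m → ℝ, G(τ) := sup_{ω∈ℝ} F(e^{-iωτ₁},…,e^{-iωτₘ}) and the 'strong' value sG(τ) := lim_{ε→0⁺} sup { G(τ') : τ' ∈ B(τ,ε) ∩ (ℝ₊)^m }. Then sG(τ) equals the maximum of F over the m-torus, and in particular sG is independent of τ. -/
open Metric Set

/-- The m-torus, viewed as a subset of ℂ^m. -/
def torus (m : ℕ) : Set (Fin m → ℂ) := {z | ∀ i, ‖z i‖ = 1}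

/-- The set of strictly positive delay vectors. -/
def posDelays (m : ℕ) : Set (Fin m → ℝ) := {τ | ∀ i, 0 < τ i}

/-- `G τ = sup_{ω∈ℝ} F(e^{-iωτ₁},…,e^{-iωτₘ})`. -/
noncomputable def Gval {m : ℕ} (F : (Fin m → ℂ) → ℝ) (τ : Fin m → ℝ) : ℝ :=
  ⨆ ω : ℝ, F (fun i => Complex.exp (-(Complex.I * ω * τ i)))

/-- The strong value `sG(τ) = lim_{ε→0⁺} sup {G(τ') : τ' ∈ B(τ,ε) ∩ (ℝ₊)^m}`;
since the inner supremum is monotone in ε, the limit equals the infimum over ε > 0. -/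
noncomputable def sGval {m : ℕ} (F : (Fin m → ℂ) → ℝ) (τ : Fin m → ℝ) : ℝ :=
  ⨅ ε : Ioi (0 : ℝ), sSup (Gval F '' (ball τ (ε : ℝ) ∩ posDelays m))

lemma mem_torus_exp {m : ℕ} (ω : ℝ) (τ : Fin m → ℝ) :
    (fun i => Complex.exp (-(Complex.I * ω * τ i))) ∈ torus m := by
  intro i
  rw [Complex.norm_exp]
  simp

lemma torus_compact (m : ℕ) : IsCompact (torus m) := by
  have : torus m = Set.pi Set.univ (fun _ : Fin m => Metric.sphere (0:ℂ) 1) := by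
    ext z
    simp [torus, Set.mem_pi, Complex.dist_eq]
  rw [this]
  exact isCompact_univ_pi (fun _ => isCompact_sphere 0 1)

lemma torus_nonempty (m : ℕ) : (torus m).Nonempty :=
  ⟨fun _ => 1, fun i => by simp⟩

lemma bddAbove_F {m : ℕ} {F : (Fin m → ℂ) → ℝ} (hF : Continuous F) :
    BddAbove (F '' torus m) :=
  ((torus_compact m).image hF).bddAbove

lemma Gval_le {m : ℕ} {F : (Fin m → ℂ) → ℝ} (hF : Continuous F) (τ : Fin m → ℝ) :
    Gval F τ ≤ sSup (F '' torus m) := by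
  apply ciSup_le
  intro ω
  exact le_csSup (bddAbove_F hF) ⟨_, mem_torus_exp ω τ, rfl⟩

lemma bddAbove_range_G {m : ℕ} {F : (Fin m → ℂ) → ℝ} (hF : Continuous F) (τ : Fin m → ℝ) :
    BddAbove (Set.range fun ω : ℝ => F (fun i => Complex.exp (-(Complex.I * ω * τ i)))) := by
  apply (bddAbove_F hF).mono
  rintro x ⟨ω, rfl⟩
  exact ⟨_, mem_torus_exp ω τ, rfl⟩

-- key construction
lemma exists_delay {m : ℕ} (τ : Fin m → ℝ) (hτ : τ ∈ posDelays m) {ε : ℝ} (hε : 0 < ε)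
    (z : Fin m → ℂ) (hz : z ∈ torus m) :
    ∃ τ' ∈ ball τ ε ∩ posDelays m, ∃ ω : ℝ,
      (fun i => Complex.exp (-(Complex.I * ω * τ' i))) = z := by
  set ω : ℝ := 1 + Real.pi / ε + ∑ i, Real.pi / τ i with hω
  have hterm : ∀ i : Fin m, 0 < Real.pi / τ i := fun i => div_pos Real.pi_pos (hτ i)
  have hsum : (0:ℝ) ≤ ∑ i, Real.pi / τ i := Finset.sum_nonneg fun i _ => (hterm i).le
  have hωpos : 0 < ω := by positivity
  have hωε : Real.pi / ω < ε := by
    have h1 : Real.pi / ε < ω := by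
      have : (0:ℝ) < 1 := one_pos
      nlinarith [Real.pi_pos]
    have h2 := (div_lt_iff₀ hε).mp h1
    rw [div_lt_iff₀ hωpos]
    nlinarith
  have hωτ : ∀ i, Real.pi / ω < τ i := by
    intro i
    have h1 : Real.pi / τ i < ω := by
      have := Finset.single_le_sum (f := fun i => Real.pi / τ i) (fun j _ => (hterm j).le)
        (Finset.mem_univ i)
      have h2 : 0 < Real.pi / ε := div_pos Real.pi_pos hε
      linarith
    have h2 := (div_lt_iff₀ (hτ i)).mp h1
    rw [div_lt_iff₀ hωpos]
    nlinarith
  set θ : Fin m → ℝ := fun i => Complex.arg (z i) with hθ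
  set k : Fin m → ℤ := fun i => round ((ω * τ i + θ i) / (2 * Real.pi)) with hk
  set τ' : Fin m → ℝ := fun i => (-θ i + 2 * Real.pi * k i) / ω with hτ'
  have hdist : ∀ i, |τ' i - τ i| ≤ Real.pi / ω := by
    intro i
    have h2π : (0:ℝ) < 2 * Real.pi := by positivity
    have hr := abs_sub_round ((ω * τ i + θ i) / (2 * Real.pi))
    rw [abs_sub_comm] at hr
    have : τ' i - τ i = (2 * Real.pi * ((k i : ℝ) - (ω * τ i + θ i) / (2 * Real.pi))) / ω := by
      simp only [hτ']
      field_simp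
      ring
    rw [this, abs_div, abs_of_pos hωpos, abs_mul, abs_of_pos h2π]
    rw [div_le_div_iff₀ hωpos hωpos]
    have h3 : |(k i : ℝ) - (ω * τ i + θ i) / (2 * Real.pi)| ≤ 1 / 2 := hr
    nlinarith [Real.pi_pos, mul_le_mul_of_nonneg_right (mul_le_mul_of_nonneg_left h3 h2π.le) hωpos.le]
  refine ⟨τ', ⟨?_, ?_⟩, ω, ?_⟩
  · rw [mem_ball]
    rcases isEmpty_or_nonempty (Fin m) with hm | hm
    · simp [dist_pi_def]
      exact hε
    · rw [dist_pi_lt_iff hε]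
      intro i
      rw [Real.dist_eq]
      exact lt_of_le_of_lt (hdist i) hωε
  · intro i
    have h1 := hdist i
    have h2 := hωτ i
    have h3 := (abs_le.mp h1).1
    linarith
  · funext i
    have hωτ'i : (ω : ℂ) * (τ' i : ℂ) = (-(θ i) : ℝ) + 2 * Real.pi * (k i : ℝ) := by
      have : ω * τ' i = -θ i + 2 * Real.pi * k i := by
        rw [hτ']
        field_simp
      push_cast
      rw [← Complex.ofReal_mul, this]
      push_cast
      ring
    have : -(Complex.I * ω * τ' i) = θ i * Complex.I + (-(k i) : ℤ) * (2 * Real.pi * Complex.I) := by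
      rw [mul_assoc, hωτ'i]
      push_cast
      ring
    rw [this, Complex.exp_add, Complex.exp_int_mul_two_pi_mul_I]
    have := Complex.norm_mul_exp_arg_mul_I (z i)
    rw [hz i] at this
    simp at this
    rw [mul_one]
    exact this

lemma sSup_ball_eq {m : ℕ} {F : (Fin m → ℂ) → ℝ} (hF : Continuous F)
    (τ : Fin m → ℝ) (hτ : τ ∈ posDelays m) {ε : ℝ} (hε : 0 < ε) :
    sSup (Gval F '' (ball τ ε ∩ posDelays m)) = sSup (F '' torus m) := by
  have hne : (Gval F '' (ball τ ε ∩ posDelays m)).Nonempty :=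
    ⟨Gval F τ, τ, ⟨mem_ball_self hε, hτ⟩, rfl⟩
  have hbdd : BddAbove (Gval F '' (ball τ ε ∩ posDelays m)) := by
    refine ⟨sSup (F '' torus m), ?_⟩
    rintro y ⟨τ', _, rfl⟩
    exact Gval_le hF τ'
  apply le_antisymm
  · apply csSup_le hne
    rintro y ⟨τ', _, rfl⟩
    exact Gval_le hF τ'
  · apply csSup_le ((torus_nonempty m).image F)
    rintro y ⟨z, hz, rfl⟩
    obtain ⟨τ', hτ'mem, ω, hωe⟩ := exists_delay τ hτ hε z hz
    have h1 : F z ≤ Gval F τ' := by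
      rw [← hωe]
      exact le_ciSup (bddAbove_range_G hF τ') ω
    exact h1.trans (le_csSup hbdd ⟨τ', hτ'mem, rfl⟩)

/-- The strong value `sG(τ)` is indeed the limit as ε → 0⁺ of the ball suprema and
it equals the maximum of F over the m-torus; in particular it is independent of τ. -/
theorem strong_value_eq_torus_max {m : ℕ} (F : (Fin m → ℂ) → ℝ) (hF : Continuous F)
    (τ : Fin m → ℝ) (hτ : τ ∈ posDelays m) :
    Filter.Tendsto
        (fun ε : ℝ => sSup (Gval F '' (ball τ ε ∩ posDelays m)))
        (nhdsWithin 0 (Ioi 0)) (nhds (sGval F τ)) ∧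
    sGval F τ = sSup (F '' torus m) := by
  haveI : Nonempty (Ioi (0:ℝ)) := ⟨⟨1, mem_Ioi.mpr one_pos⟩⟩
  have hs : sGval F τ = sSup (F '' torus m) := by
    unfold sGval
    rw [iInf_congr (fun ε : Ioi (0:ℝ) => sSup_ball_eq hF τ hτ ε.2)]
    exact ciInf_const
  refine ⟨?_, hs⟩
  rw [hs]
  apply Filter.Tendsto.congr' _ tendsto_const_nhds
  exact Filter.eventuallyEq_of_mem self_mem_nhdsWithin
    (fun ε hε => (sSup_ball_eq hF τ hτ hε).symm)
end

section
/- With Tₐ as above and rationally independent delays τ, the H∞ norm equals the torus maximum: sup_{ω∈ℝ} σ₁(Tₐ(iω,τ)) = max_{θ∈[0,2π]^m} σ₁(-C₂ (A₀ + ∑ᵢ Aᵢ e^{-iθᵢ})⁻¹ B₂). -/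
open Set MeasureTheory

/-- The largest singular value (operator norm w.r.t. Euclidean norms) of a complex
matrix. -/
noncomputable def sigma1 {p q : ℕ} (M : Matrix (Fin q) (Fin p) ℂ) : ℝ :=
  ‖LinearMap.toContinuousLinearMap (Matrix.toEuclideanLin M)‖

/-- Rational independence of real numbers τ₁,…,τₘ. -/
def RatIndep {m : ℕ} (τ : Fin m → ℝ) : Prop :=
  ∀ z : Fin m → ℤ, (∑ k, (z k : ℝ) * τ k) = 0 → ∀ k, z k = 0

lemma sigma1_continuous {p q : ℕ} : Continuous (sigma1 (p := p) (q := q)) := by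
  have h : Continuous fun M : Matrix (Fin q) (Fin p) ℂ =>
      (LinearMap.toContinuousLinearMap (Matrix.toEuclideanLin M)) := by
    exact ((LinearMap.toContinuousLinearMap.toLinearMap.comp
      (Matrix.toEuclideanLin (𝕜 := ℂ) (m := Fin q) (n := Fin p)).toLinearMap)).continuous_of_finiteDimensional
  exact continuous_norm.comp h

noncomputable def Fmat {m n p q : ℕ} (A₀ : Matrix (Fin n) (Fin n) ℂ)
    (A : Fin m → Matrix (Fin n) (Fin n) ℂ) (B₂ : Matrix (Fin n) (Fin p) ℂ)
    (C₂ : Matrix (Fin q) (Fin n) ℂ) (z : Fin m → ℂ) : ℝ :=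
  sigma1 (-(C₂ * (A₀ + ∑ i, z i • A i)⁻¹ * B₂))

lemma Fmat_continuousAt {m n p q : ℕ} (A₀ : Matrix (Fin n) (Fin n) ℂ)
    (A : Fin m → Matrix (Fin n) (Fin n) ℂ) (B₂ : Matrix (Fin n) (Fin p) ℂ)
    (C₂ : Matrix (Fin q) (Fin n) ℂ) {x : Fin m → ℂ}
    (hx : IsUnit (A₀ + ∑ i, x i • A i)) :
    ContinuousAt (Fmat A₀ A B₂ C₂) x := by
  have hN : Continuous fun z : Fin m → ℂ => A₀ + ∑ i, z i • A i :=
    continuous_const.add (continuous_finset_sum _ fun i _ =>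
      (continuous_apply i).smul continuous_const)
  have hdet : (A₀ + ∑ i, x i • A i).det ≠ 0 := by
    have := (Matrix.isUnit_iff_isUnit_det _).1 hx
    exact IsUnit.ne_zero this
  have hinv : ContinuousAt (fun z : Fin m → ℂ => (A₀ + ∑ i, z i • A i)⁻¹) x := by
    simp only [Matrix.inv_def, Ring.inverse_eq_inv']
    exact ((hN.matrix_det.continuousAt.inv₀ hdet).smul hN.matrix_adjugate.continuousAt)
  have houter : Continuous fun M : Matrix (Fin n) (Fin n) ℂ => -(C₂ * M * B₂) :=
    ((continuous_const.matrix_mul continuous_id).matrix_mul continuous_const).neg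
  exact (sigma1_continuous.continuousAt).comp <| (houter.continuousAt).comp hinv


namespace Kron

variable {m : ℕ}

/-- characters of the torus `(Circle)^m` -/
noncomputable def char (k : Fin m → ℤ) : C(Fin m → Circle, ℂ) :=
  ⟨fun x => ∏ i, ((x i ^ k i : Circle) : ℂ), by
    refine continuous_finset_prod _ fun i _ => ?_
    have h1 : Continuous fun z : Circle => ((z ^ k i : Circle) : ℂ) :=
      continuous_subtype_val.comp (continuous_zpow (k i))
    exact h1.comp (continuous_apply i)⟩

lemma char_apply (k : Fin m → ℤ) (x : Fin m → Circle) :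
    char k x = ∏ i, ((x i ^ k i : Circle) : ℂ) := rfl

lemma char_zero : char (0 : Fin m → ℤ) = 1 := by
  ext x; simp [char_apply]

lemma char_mul_char (k l : Fin m → ℤ) : char k * char l = char (k + l) := by
  ext x
  simp only [ContinuousMap.mul_apply, char_apply, ← Finset.prod_mul_distrib]
  refine Finset.prod_congr rfl fun i _ => ?_
  rw [Pi.add_apply, zpow_add (x i), Circle.coe_mul]

lemma star_char (k : Fin m → ℤ) : star (char k) = char (-k) := by
  ext x
  simp only [ContinuousMap.star_apply, char_apply, star_prod]
  refine Finset.prod_congr rfl fun i _ => ?_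
  rw [Pi.neg_apply, zpow_neg, Circle.coe_inv_eq_conj]
  rfl

lemma char_mul (k : Fin m → ℤ) (x y : Fin m → Circle) :
    char k (x * y) = char k x * char k y := by
  simp only [char_apply, ← Finset.prod_mul_distrib]
  refine Finset.prod_congr rfl fun i _ => ?_
  rw [Pi.mul_apply, mul_zpow, Circle.coe_mul]

/-- the span of the characters -/
noncomputable def charSpan (m : ℕ) : Submodule ℂ C(Fin m → Circle, ℂ) :=
  Submodule.span ℂ (Set.range (char (m := m)))

noncomputable def charAlg (m : ℕ) : StarSubalgebra ℂ C(Fin m → Circle, ℂ) where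
  toSubalgebra := Algebra.adjoin ℂ (Set.range (char (m := m)))
  star_mem' := by
    show Algebra.adjoin ℂ (Set.range (char (m := m))) ≤
      star (Algebra.adjoin ℂ (Set.range (char (m := m))))
    refine Algebra.adjoin_le ?_
    rintro - ⟨k, rfl⟩
    rw [SetLike.mem_coe, Subalgebra.mem_star_iff, star_char]
    exact Algebra.subset_adjoin ⟨-k, rfl⟩

lemma charAlg_coe : Subalgebra.toSubmodule (charAlg m).toSubalgebra = charSpan m := by
  apply Algebra.adjoin_eq_span_of_subset
  refine Subset.trans ?_ Submodule.subset_span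
  intro x hx
  refine Submonoid.closure_induction (fun _ => id) ⟨0, char_zero⟩ ?_ hx
  rintro - - - - ⟨k, rfl⟩ ⟨l, rfl⟩
  exact ⟨k + l, (char_mul_char k l).symm⟩

lemma char_single (i : Fin m) (x : Fin m → Circle) :
    char (Pi.single i 1) x = x i := by
  rw [char_apply, Finset.prod_eq_single i]
  · simp
  · intro j _ hj; simp [Pi.single_eq_of_ne hj]
  · simp

lemma charAlg_separatesPoints : (charAlg m).SeparatesPoints := by
  intro x y hxy
  obtain ⟨i, hi⟩ : ∃ i, x i ≠ y i := by
    by_contra h; push_neg at h; exact hxy (funext h)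
  refine ⟨_, ⟨char (Pi.single i 1), Algebra.subset_adjoin ⟨_, rfl⟩, rfl⟩, ?_⟩
  dsimp only
  rw [char_single, char_single]
  exact fun h => hi (Circle.coe_injective h)

lemma charSpan_closure_eq_top :
    (charSpan m).topologicalClosure = ⊤ := by
  rw [← charAlg_coe]
  exact congr_arg (Subalgebra.toSubmodule <| StarSubalgebra.toSubalgebra ·)
    (ContinuousMap.starSubalgebra_topologicalClosure_eq_top_of_separatesPoints (charAlg m)
      charAlg_separatesPoints)


open Filter Topology

noncomputable instance : MeasurableSpace Circle := borel Circle
instance : BorelSpace Circle := ⟨rfl⟩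

noncomputable def haarT (m : ℕ) : Measure (Fin m → Circle) := Measure.haarMeasure ⊤

instance : (haarT m).IsMulLeftInvariant := by unfold haarT; infer_instance
instance : IsProbabilityMeasure (haarT m) :=
  ⟨by rw [← TopologicalSpace.PositiveCompacts.coe_top (α := Fin m → Circle)]
      exact Measure.haarMeasure_self⟩
instance : (haarT m).IsOpenPosMeasure := by unfold haarT; infer_instance

lemma integrable_cm (f : C(Fin m → Circle, ℂ)) : Integrable f (haarT m) :=
  f.continuous.integrable_of_hasCompactSupport ((isClosed_tsupport _).isCompact)

lemma coe_zpow (z : Circle) (n : ℤ) : ((z ^ n : Circle) : ℂ) = (z : ℂ) ^ n :=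
  MonoidHom.map_zpow' Circle.coeHom Circle.coe_inv z n

lemma integral_char_ne_zero {k : Fin m → ℤ} (hk : k ≠ 0) :
    ∫ x, char k x ∂(haarT m) = 0 := by
  obtain ⟨j, hj⟩ : ∃ j, k j ≠ 0 := by
    by_contra h; push_neg at h; exact hk (funext h)
  set y : Fin m → Circle := Pi.mulSingle j (Circle.exp (Real.pi / (k j))) with hy
  have hchary : char k y = -1 := by
    rw [char_apply, Finset.prod_eq_single j]
    · rw [hy, Pi.mulSingle_eq_same, coe_zpow, Circle.coe_exp, ← Complex.exp_int_mul]
      rw [show ((k j : ℂ) * ((Real.pi / (k j) : ℝ) * Complex.I)) = Real.pi * Complex.I by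
        push_cast
        have : (k j : ℂ) ≠ 0 := by exact_mod_cast hj
        field_simp]
      exact Complex.exp_pi_mul_I
    · intro i _ hij
      rw [hy, Pi.mulSingle_eq_of_ne hij, one_zpow, Circle.coe_one]
    · intro h; exact absurd (Finset.mem_univ j) h
  have h1 := integral_mul_left_eq_self (μ := haarT m) (fun x => char k x) y
  have h2 : (∫ x, char k (y * x) ∂(haarT m)) = char k y * ∫ x, char k x ∂(haarT m) := by
    simp_rw [char_mul, ← smul_eq_mul (a := char k y), integral_smul]
  rw [h2, hchary] at h1
  have : (-1 - 1 : ℂ) * ∫ x, char k x ∂(haarT m) = 0 := by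
    rw [sub_mul, h1]; ring
  have hne : (-1 - 1 : ℂ) ≠ 0 := by norm_num
  exact (mul_eq_zero.1 this).resolve_left hne

lemma integral_char_zero : ∫ x, char (0 : Fin m → ℤ) x ∂(haarT m) = 1 := by
  rw [char_zero]
  simp

/-- the one-parameter line in the torus -/
noncomputable def lineG (τ : Fin m → ℝ) : ℝ → (Fin m → Circle) :=
  fun ω i => Circle.exp (-(ω * τ i))

lemma continuous_lineG (τ : Fin m → ℝ) : Continuous (lineG τ) :=
  continuous_pi fun i => Circle.exp.continuous.comp (by continuity)

lemma char_lineG (τ : Fin m → ℝ) (k : Fin m → ℤ) (ω : ℝ) :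
    char k (lineG τ ω) =
      Complex.exp (((-(ω * ∑ i, (k i : ℝ) * τ i) : ℝ)) * Complex.I) := by
  rw [char_apply]
  have h1 : ∀ i, ((lineG τ ω i ^ k i : Circle) : ℂ) =
      Complex.exp ((k i : ℂ) * (((-(ω * τ i)) : ℝ) * Complex.I)) := fun i => by
    rw [lineG, coe_zpow, Circle.coe_exp, ← Complex.exp_int_mul]
  simp_rw [h1, ← Complex.exp_sum]
  congr 1
  push_cast
  rw [Finset.mul_sum, ← Finset.sum_neg_distrib, Finset.sum_mul]
  exact Finset.sum_congr rfl fun i _ => by ring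

/-- time average of `f` along the line, up to time `T` -/
noncomputable def avg (τ : Fin m → ℝ) (f : C(Fin m → Circle, ℂ)) (T : ℝ) : ℂ :=
  (T⁻¹ : ℝ) • ∫ ω in (0:ℝ)..T, f (lineG τ ω)

lemma intInt (τ : Fin m → ℝ) (f : C(Fin m → Circle, ℂ)) (T : ℝ) :
    IntervalIntegrable (fun ω => f (lineG τ ω)) MeasureTheory.volume 0 T :=
  (f.continuous.comp (continuous_lineG τ)).intervalIntegrable _ _

lemma tendsto_avg_char (τ : Fin m → ℝ)
    (hτ : ∀ k : Fin m → ℤ, k ≠ 0 → (∑ i, (k i : ℝ) * τ i) ≠ 0) (k : Fin m → ℤ) :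
    Tendsto (avg τ (char k)) atTop (𝓝 (∫ x, char k x ∂(haarT m))) := by
  by_cases hk : k = 0
  · subst hk
    rw [integral_char_zero]
    have h : ∀ᶠ T : ℝ in atTop, avg τ (char 0) T = 1 := by
      filter_upwards [eventually_ge_atTop (1 : ℝ)] with T hT
      have hT0 : T ≠ 0 := by linarith
      rw [avg]
      simp only [char_zero, ContinuousMap.one_apply]
      rw [intervalIntegral.integral_const, sub_zero, smul_smul, inv_mul_cancel₀ hT0, one_smul]
    exact Tendsto.congr' (h.mono fun T hT => hT.symm) tendsto_const_nhds
  · have hs : (∑ i, (k i : ℝ) * τ i) ≠ 0 := hτ k hk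
    set s : ℝ := ∑ i, (k i : ℝ) * τ i with hsdef
    set c : ℂ := -(s : ℂ) * Complex.I with hcdef
    have hc : c ≠ 0 := by
      simp only [hcdef, neg_mul, neg_ne_zero, mul_ne_zero_iff, Complex.ofReal_ne_zero]
      exact ⟨hs, Complex.I_ne_zero⟩
    have hval : ∀ T : ℝ, avg τ (char k) T =
        (T⁻¹ : ℝ) • ((Complex.exp (c * T) - 1) / c) := by
      intro T
      rw [avg]
      congr 1
      have hpt : ∀ ω : ℝ, char k (lineG τ ω) = Complex.exp (c * ω) := fun ω => by
        rw [char_lineG τ k ω, ← hsdef]; congr 1; push_cast; ring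
      simp_rw [hpt]
      rw [integral_exp_mul_complex hc]
      simp
    rw [integral_char_ne_zero hk]
    have hnorm : ∀ᶠ T : ℝ in atTop, ‖avg τ (char k) T‖ ≤ (2 / ‖c‖) * T⁻¹ := by
      filter_upwards [eventually_ge_atTop (1 : ℝ)] with T hT
      have hT0 : (0 : ℝ) < T := by linarith
      rw [hval, norm_smul]
      have habs : ‖Complex.exp (c * T)‖ = 1 := by
        rw [show c * (T : ℂ) = ((-(s * T) : ℝ) : ℂ) * Complex.I by push_cast; ring]
        rw [Complex.norm_exp_ofReal_mul_I]
      have h2 : ‖(Complex.exp (c * T) - 1) / c‖ ≤ 2 / ‖c‖ := by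
        rw [norm_div]
        have hnum : ‖Complex.exp (c * T) - 1‖ ≤ 2 :=
          (norm_sub_le _ _).trans (by rw [habs, norm_one]; norm_num)
        gcongr
      calc ‖(T⁻¹ : ℝ)‖ * ‖(Complex.exp (c * T) - 1) / c‖
          ≤ T⁻¹ * (2 / ‖c‖) := by
            rw [Real.norm_eq_abs, abs_of_pos (inv_pos.2 hT0)]
            exact mul_le_mul_of_nonneg_left h2 (inv_pos.2 hT0).le
        _ = (2 / ‖c‖) * T⁻¹ := by ring
    have hlim : Tendsto (fun T : ℝ => (2 / ‖c‖) * T⁻¹) atTop (𝓝 0) := by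
      simpa using (tendsto_inv_atTop_zero.const_mul (2 / ‖c‖))
    exact squeeze_zero_norm' hnorm hlim

lemma tendsto_avg_span (τ : Fin m → ℝ)
    (hτ : ∀ k : Fin m → ℤ, k ≠ 0 → (∑ i, (k i : ℝ) * τ i) ≠ 0)
    {P : C(Fin m → Circle, ℂ)} (hP : P ∈ charSpan m) :
    Tendsto (avg τ P) atTop (𝓝 (∫ x, P x ∂(haarT m))) := by
  induction hP using Submodule.span_induction with
  | mem x hx =>
    obtain ⟨k, rfl⟩ := hx
    exact tendsto_avg_char τ hτ k
  | zero =>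
    have : avg τ 0 = fun _ => 0 := by
      funext T; rw [avg]; simp
    rw [this]
    simpa using (tendsto_const_nhds : Tendsto (fun _ : ℝ => (0 : ℂ)) atTop _)
  | add x y hx hy hx' hy' =>
    have : avg τ (x + y) = fun T => avg τ x T + avg τ y T := by
      funext T
      rw [avg, avg, avg]
      simp only [ContinuousMap.add_apply]
      rw [intervalIntegral.integral_add (intInt τ x T) (intInt τ y T), smul_add]
    rw [this, show (∫ z, (x + y) z ∂(haarT m)) = (∫ z, x z ∂(haarT m)) + ∫ z, y z ∂(haarT m) by
      simp_rw [ContinuousMap.add_apply]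
      exact integral_add (integrable_cm x) (integrable_cm y)]
    exact hx'.add hy'
  | smul a x hx hx' =>
    have : avg τ (a • x) = fun T => a • avg τ x T := by
      funext T
      rw [avg, avg]
      simp only [ContinuousMap.smul_apply]
      rw [intervalIntegral.integral_smul, smul_comm]
    rw [this, show (∫ z, (a • x) z ∂(haarT m)) = a • ∫ z, x z ∂(haarT m) by
      simp_rw [ContinuousMap.smul_apply]
      exact integral_smul a _]
    exact hx'.const_smul a


theorem dense_lineG (τ : Fin m → ℝ)
    (hτ : ∀ k : Fin m → ℤ, k ≠ 0 → (∑ i, (k i : ℝ) * τ i) ≠ 0) :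
    Dense (Set.range (lineG τ)) := by
  by_contra hnd
  simp only [Dense, not_forall] at hnd
  obtain ⟨x₀, hx₀⟩ := hnd
  obtain ⟨f, hf0, hf1, hficc⟩ := exists_continuous_zero_one_of_isClosed
    (isClosed_closure (s := Set.range (lineG τ))) (isClosed_singleton (x := x₀))
    (by rwa [Set.disjoint_singleton_right])
  set fC : C(Fin m → Circle, ℂ) :=
    ⟨fun x => (f x : ℂ), Complex.continuous_ofReal.comp f.continuous⟩ with hfC
  have hpos : 0 < ∫ x, f x ∂(haarT m) :=
    f.continuous.integral_pos_of_hasCompactSupport_nonneg_nonzero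
      ((isClosed_tsupport _).isCompact) (fun x => (hficc x).1)
      (by rw [hf1 (Set.mem_singleton x₀)]; norm_num)
  have hline0 : ∀ ω : ℝ, fC (lineG τ ω) = 0 := fun ω => by
    have h := hf0 (subset_closure (Set.mem_range_self ω))
    simp only [hfC, ContinuousMap.coe_mk, ContinuousMap.zero_apply] at h ⊢
    rw [h]; norm_num
  have hIfC : (∫ x, fC x ∂(haarT m)) = ((∫ x, f x ∂(haarT m) : ℝ) : ℂ) := integral_ofReal
  have key : ∀ ε : ℝ, 0 < ε → ‖∫ x, fC x ∂(haarT m)‖ ≤ 3 * ε := by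
    intro ε hε
    have hmem : fC ∈ closure ((charSpan m : Set C(Fin m → Circle, ℂ))) := by
      have h2 : fC ∈ (charSpan m).topologicalClosure := by
        rw [charSpan_closure_eq_top]; trivial
      exact h2
    obtain ⟨P, hPmem, hPdist⟩ := Metric.mem_closure_iff.1 hmem ε hε
    have hPspan : P ∈ charSpan m := hPmem
    have havg := tendsto_avg_span τ hτ hPspan
    obtain ⟨T, hT1, hTd⟩ : ∃ T : ℝ, 1 ≤ T ∧
        dist (avg τ P T) (∫ x, P x ∂(haarT m)) < ε := by
      obtain ⟨T, hT⟩ :=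
        ((Metric.tendsto_nhds.1 havg ε hε).and (eventually_ge_atTop (1 : ℝ))).exists
      exact ⟨T, hT.2, hT.1⟩
    have hT0 : (0 : ℝ) < T := zero_lt_one.trans_le hT1
    have hnormfp : ‖fC - P‖ < ε := by rwa [dist_eq_norm] at hPdist
    have hb1 : ‖(∫ x, fC x ∂(haarT m)) - ∫ x, P x ∂(haarT m)‖ ≤ ε := by
      rw [← integral_sub (integrable_cm fC) (integrable_cm P)]
      have := norm_integral_le_of_norm_le_const (μ := haarT m)
        (f := fun x => fC x - P x) (C := ε) (.of_forall fun x => by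
          calc ‖fC x - P x‖ = ‖(fC - P) x‖ := by rw [ContinuousMap.sub_apply]
            _ ≤ ‖fC - P‖ := ContinuousMap.norm_coe_le_norm _ _
            _ ≤ ε := hnormfp.le)
      simpa using this
    have hb2 : ‖avg τ P T‖ ≤ ε := by
      have heq : avg τ P T =
          (T⁻¹ : ℝ) • ∫ ω in (0:ℝ)..T, (P (lineG τ ω) - fC (lineG τ ω)) := by
        rw [avg]
        congr 1
        refine intervalIntegral.integral_congr fun ω _ => ?_
        rw [hline0]; ring
      rw [heq, norm_smul]
      have hInorm : ‖∫ ω in (0:ℝ)..T, (P (lineG τ ω) - fC (lineG τ ω))‖ ≤ ε * |T - 0| := by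
        apply intervalIntegral.norm_integral_le_of_norm_le_const
        intro ω _
        calc ‖P (lineG τ ω) - fC (lineG τ ω)‖ = ‖(fC - P) (lineG τ ω)‖ := by
              rw [norm_sub_rev, ContinuousMap.sub_apply]
          _ ≤ ‖fC - P‖ := ContinuousMap.norm_coe_le_norm _ _
          _ ≤ ε := hnormfp.le
      calc ‖(T⁻¹ : ℝ)‖ * ‖∫ ω in (0:ℝ)..T, (P (lineG τ ω) - fC (lineG τ ω))‖
          ≤ T⁻¹ * (ε * |T - 0|) := by
            rw [Real.norm_eq_abs, abs_of_pos (inv_pos.2 hT0)]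
            exact mul_le_mul_of_nonneg_left hInorm (inv_pos.2 hT0).le
        _ = ε := by rw [sub_zero, abs_of_pos hT0]; field_simp
    calc ‖∫ x, fC x ∂(haarT m)‖
        = ‖((∫ x, fC x ∂(haarT m)) - ∫ x, P x ∂(haarT m))
            + ((∫ x, P x ∂(haarT m)) - avg τ P T) + avg τ P T‖ := by ring_nf
      _ ≤ ‖((∫ x, fC x ∂(haarT m)) - ∫ x, P x ∂(haarT m))
            + ((∫ x, P x ∂(haarT m)) - avg τ P T)‖ + ‖avg τ P T‖ := norm_add_le _ _
      _ ≤ (‖(∫ x, fC x ∂(haarT m)) - ∫ x, P x ∂(haarT m)‖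
            + ‖(∫ x, P x ∂(haarT m)) - avg τ P T‖) + ‖avg τ P T‖ := by
            gcongr; exact norm_add_le _ _
      _ ≤ (ε + ε) + ε := by
            gcongr
            · rw [← dist_eq_norm]; rw [dist_comm]; exact hTd.le
      _ = 3 * ε := by ring
  have hzero : ‖∫ x, fC x ∂(haarT m)‖ ≤ 0 := by
    refine le_of_forall_pos_le_add fun ε hε => ?_
    calc ‖∫ x, fC x ∂(haarT m)‖ ≤ 3 * (ε / 3) := key (ε / 3) (by linarith)
      _ = 0 + ε := by ring
  have : (∫ x, f x ∂(haarT m)) = 0 := by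
    have h0 : (∫ x, fC x ∂(haarT m)) = 0 := by
      rwa [← norm_le_zero_iff]
    rw [hIfC] at h0
    exact_mod_cast h0
  linarith

end Kron

lemma torus_subset_closure_line {m : ℕ} (τ : Fin m → ℝ)
    (hτ : ∀ k : Fin m → ℤ, k ≠ 0 → (∑ i, (k i : ℝ) * τ i) ≠ 0) :
    torus m ⊆ closure (Set.range fun ω : ℝ =>
      fun i => Complex.exp (-(Complex.I * ω * τ i))) := by
  intro x hx
  have hmem : ∀ i, x i ∈ Metric.sphere (0:ℂ) 1 := fun i => by
    rw [mem_sphere_zero_iff_norm]; exact hx i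
  set c : (Fin m → Circle) → (Fin m → ℂ) := fun h i => (h i : ℂ) with hcdef
  set g : Fin m → Circle := fun i => ⟨x i, hmem i⟩ with hg
  have hc : Continuous c :=
    continuous_pi fun i => continuous_subtype_val.comp (continuous_apply i)
  have hgcl : g ∈ closure (Set.range (Kron.lineG τ)) := Kron.dense_lineG τ hτ g
  have h1 : x ∈ c '' closure (Set.range (Kron.lineG τ)) := ⟨g, hgcl, rfl⟩
  have h2 := image_closure_subset_closure_image hc h1
  rw [← Set.range_comp] at h2
  have hrange : (c ∘ Kron.lineG τ) = fun ω : ℝ =>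
      fun i => Complex.exp (-(Complex.I * ω * τ i)) := by
    funext ω i
    show ((Circle.exp (-(ω * τ i)) : Circle) : ℂ) = _
    rw [Circle.coe_exp]
    congr 1
    push_cast
    ring
  rwa [hrange] at h2

lemma exp_image_Icc {m : ℕ} :
    (fun θ : Fin m → ℝ => fun i => Complex.exp (-(Complex.I * θ i))) ''
      (Set.pi univ fun _ => Icc (0:ℝ) (2 * Real.pi)) = torus m := by
  apply Set.Subset.antisymm
  · rintro - ⟨θ, hθ, rfl⟩ i
    beta_reduce
    rw [show -(Complex.I * (θ i : ℂ)) = ((-(θ i) : ℝ) : ℂ) * Complex.I by push_cast; ring]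
    exact Complex.norm_exp_ofReal_mul_I _
  · intro x hx
    refine ⟨fun i => if 0 ≤ Complex.arg (x i) then 2*Real.pi - Complex.arg (x i)
      else -Complex.arg (x i), ?_, ?_⟩
    · intro i _
      have h1 := Complex.neg_pi_lt_arg (x i)
      have h2 := Complex.arg_le_pi (x i)
      have hπ := Real.pi_pos
      by_cases h : 0 ≤ Complex.arg (x i) <;>
        simp only [h, if_true, if_false, Set.mem_Icc] <;>
        constructor <;> linarith
    · funext i
      simp only []
      have hxi : Complex.exp (Complex.arg (x i) * Complex.I) = x i := by
        have h := Complex.norm_mul_exp_arg_mul_I (x i)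
        rwa [hx i, Complex.ofReal_one, one_mul] at h
      by_cases h : 0 ≤ Complex.arg (x i)
      · rw [if_pos h]
        rw [show -(Complex.I * ((2*Real.pi - Complex.arg (x i) : ℝ) : ℂ)) =
          Complex.arg (x i) * Complex.I - 2*Real.pi*Complex.I by push_cast; ring]
        rw [Complex.exp_sub, Complex.exp_two_pi_mul_I, div_one, hxi]
      · rw [if_neg h]
        rw [show -(Complex.I * ((-Complex.arg (x i) : ℝ) : ℂ)) =
          Complex.arg (x i) * Complex.I by push_cast; ring]
        exact hxi

/-- For rationally independent positive delays, the H∞ norm of the asymptotic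
transfer function `Tₐ(λ,τ) = -C₂ (A₀ + ∑ᵢ Aᵢ e^{-λτᵢ})⁻¹ B₂` equals the maximum of
`θ ↦ σ₁(-C₂ (A₀ + ∑ᵢ Aᵢ e^{-iθᵢ})⁻¹ B₂)` over `[0,2π]^m`. -/
theorem asymp_hinf_eq_torus_max {m n p q : ℕ}
    (A₀ : Matrix (Fin n) (Fin n) ℂ) (A : Fin m → Matrix (Fin n) (Fin n) ℂ)
    (B₂ : Matrix (Fin n) (Fin p) ℂ) (C₂ : Matrix (Fin q) (Fin n) ℂ)
    (hinv : ∀ z ∈ torus m, IsUnit (A₀ + ∑ i, z i • A i))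
    (τ : Fin m → ℝ) (hτpos : ∀ i, 0 < τ i) (hτ : RatIndep τ) :
    (⨆ ω : ℝ, sigma1 (-(C₂ *
        (A₀ + ∑ i, Complex.exp (-(Complex.I * ω * τ i)) • A i)⁻¹ * B₂))) =
    sSup ((fun θ : Fin m → ℝ => sigma1 (-(C₂ *
        (A₀ + ∑ i, Complex.exp (-(Complex.I * θ i)) • A i)⁻¹ * B₂))) ''
      (Set.pi univ fun _ => Icc (0:ℝ) (2 * Real.pi))) := by
  classical
  have hτ' : ∀ k : Fin m → ℤ, k ≠ 0 → (∑ i, (k i : ℝ) * τ i) ≠ 0 := by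
    intro k hk hsum
    exact hk (funext (hτ k hsum))
  have hfun : (fun θ : Fin m → ℝ => sigma1 (-(C₂ *
      (A₀ + ∑ i, Complex.exp (-(Complex.I * θ i)) • A i)⁻¹ * B₂))) =
      (Fmat A₀ A B₂ C₂) ∘ (fun θ : Fin m → ℝ => fun i => Complex.exp (-(Complex.I * θ i))) :=
    rfl
  rw [hfun, Set.image_comp, exp_image_Icc]
  have hcubecomp : IsCompact (Set.pi univ fun _ : Fin m => Icc (0:ℝ) (2 * Real.pi)) :=
    isCompact_univ_pi fun _ => isCompact_Icc
  have hecont : Continuous (fun θ : Fin m → ℝ => fun i => Complex.exp (-(Complex.I * θ i))) := by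
    refine continuous_pi fun i => Complex.continuous_exp.comp ?_
    exact (continuous_const.mul ((Complex.continuous_ofReal.comp (continuous_apply i)))).neg
  have htoruscomp : IsCompact (torus m) := by
    rw [← exp_image_Icc (m := m)]
    exact hcubecomp.image hecont
  have hFcont : ContinuousOn (Fmat A₀ A B₂ C₂) (torus m) := fun x hx =>
    (Fmat_continuousAt A₀ A B₂ C₂ (hinv x hx)).continuousWithinAt
  have htorusne : (torus m).Nonempty := by
    rw [← exp_image_Icc (m := m)]
    refine Set.Nonempty.image _ ⟨fun _ => 0, fun i _ => ⟨le_refl 0, by positivity⟩⟩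
  obtain ⟨x₀, hx₀mem, hx₀⟩ := htoruscomp.exists_sSup_image_eq htorusne hFcont
  rw [hx₀]
  have hbdd : BddAbove (Fmat A₀ A B₂ C₂ '' torus m) :=
    (htoruscomp.image_of_continuousOn hFcont).bddAbove
  set gfun : ℝ → ℝ := fun ω => sigma1 (-(C₂ *
    (A₀ + ∑ i, Complex.exp (-(Complex.I * ω * τ i)) • A i)⁻¹ * B₂)) with hgfun
  have hgmem : ∀ ω : ℝ, gfun ω ∈ Fmat A₀ A B₂ C₂ '' torus m := by
    intro ω
    refine ⟨fun i => Complex.exp (-(Complex.I * ω * τ i)), fun i => ?_, rfl⟩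
    beta_reduce
    rw [show -(Complex.I * (ω : ℂ) * (τ i : ℂ)) = ((-(ω * τ i) : ℝ) : ℂ) * Complex.I by
      push_cast; ring]
    exact Complex.norm_exp_ofReal_mul_I _
  have hbdd2 : BddAbove (Set.range gfun) := hbdd.mono (Set.range_subset_iff.2 hgmem)
  apply le_antisymm
  · refine ciSup_le fun ω => ?_
    calc gfun ω ≤ sSup (Fmat A₀ A B₂ C₂ '' torus m) := le_csSup hbdd (hgmem ω)
      _ = Fmat A₀ A B₂ C₂ x₀ := hx₀
  · have hx₀cl : x₀ ∈ closure (Set.range fun ω : ℝ =>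
        fun i => Complex.exp (-(Complex.I * ω * τ i))) :=
      torus_subset_closure_line τ hτ' hx₀mem
    have hca : ContinuousWithinAt (Fmat A₀ A B₂ C₂) (Set.range fun ω : ℝ =>
        fun i => Complex.exp (-(Complex.I * ω * τ i))) x₀ :=
      (Fmat_continuousAt A₀ A B₂ C₂ (hinv x₀ hx₀mem)).continuousWithinAt
    have hFx₀ : Fmat A₀ A B₂ C₂ x₀ ∈ closure (Set.range gfun) := by
      have h := hca.mem_closure_image hx₀cl
      rwa [← Set.range_comp] at h
    have hsub : closure (Set.range gfun) ⊆ Iic (⨆ ω, gfun ω) :=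
      closure_minimal (fun y ⟨ω, hω⟩ => hω ▸ le_ciSup hbdd2 ω) isClosed_Iic
    exact hsub hFx₀
end

section
/- Let g : (ℝ₊)^m → ℝ be continuous and let c ∈ ℝ be a constant. Define f(τ) := max(g(τ), sup_{ω∈ℝ} F(e^{-iωτ₁},…,e^{-iωτₘ})) for a continuous F : ℂ^m → ℝ. Then the strong value sf(τ) := lim_{ε→0⁺} sup{f(τ') : τ' ∈ B(τ,ε) ∩ (ℝ₊)^m} satisfies sf(τ) = max(g's strong value, torus maximum of F) = max(sg(τ), max_{torus} F), and if additionally sg(τ) = g(τ) (e.g. g continuous), then sf(τ) = max(g(τ), max over the m-torus of F). -/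
open Metric Set Filter

/-- The strong value of `f` at `τ`:
`sf(τ) = lim_{ε→0⁺} sup { f(τ') : τ' ∈ B(τ,ε) ∩ (ℝ₊)^m }`. -/
noncomputable def strongVal {m : ℕ} (f : (Fin m → ℝ) → ℝ) (τ : Fin m → ℝ) : ℝ :=
  limUnder (nhdsWithin (0:ℝ) (Ioi 0))
    (fun ε : ℝ => sSup (f '' (ball τ ε ∩ posDelays m)))

/-- Squeeze criterion for the one-sided limit. -/
lemma aux_tendsto (u : ℝ → ℝ) (L : ℝ)
    (h : ∀ δ > (0:ℝ), ∀ᶠ ε in nhdsWithin (0:ℝ) (Ioi 0), L ≤ u ε ∧ u ε ≤ L + δ) :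
    Tendsto u (nhdsWithin (0:ℝ) (Ioi 0)) (nhds L) := by
  rw [Metric.tendsto_nhds]
  intro δ hδ
  filter_upwards [h (δ/2) (by linarith)] with ε hε
  rw [Real.dist_eq, abs_lt]
  constructor <;> linarith [hε.1, hε.2]

/-- Any point of the torus is hit exactly, near any positive delay vector. -/
lemma torus_point_hit {m : ℕ} (τ : Fin m → ℝ) (hτ : τ ∈ posDelays m)
    (z : Fin m → ℂ) (hz : z ∈ torus m) (ε : ℝ) (hε : 0 < ε) :
    ∃ t ∈ ball τ ε ∩ posDelays m, ∃ ω : ℝ,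
      (fun i => Complex.exp (-(Complex.I * ω * t i))) = z := by
  set ε' := ε / 2 with hε'def
  have hε' : (0:ℝ) < ε' := by positivity
  set ω := 2 * Real.pi / ε' with hωdef
  set a : Fin m → ℝ := fun i => ε' * (-(Complex.arg (z i))) / (2 * Real.pi) with hadef
  set n : Fin m → ℤ := fun i => ⌈(τ i - a i) / ε'⌉ with hndef
  set t : Fin m → ℝ := fun i => a i + ε' * n i with htdef
  have hpi : Real.pi ≠ 0 := Real.pi_ne_zero
  have ht_ge : ∀ i, τ i ≤ t i := by
    intro i
    have h1 : (τ i - a i) / ε' ≤ (n i : ℝ) := Int.le_ceil _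
    have h2 : τ i - a i ≤ ε' * n i := by
      rw [div_le_iff₀ hε'] at h1; linarith [h1]
    simp only [htdef]; linarith
  have ht_lt : ∀ i, t i < τ i + ε' := by
    intro i
    have h1 : (n i : ℝ) < (τ i - a i) / ε' + 1 := Int.ceil_lt_add_one _
    have h2 : ε' * n i < τ i - a i + ε' := by
      have := (mul_lt_mul_iff_right₀ hε').2 h1
      rw [mul_add, mul_one, mul_div_cancel₀ _ (ne_of_gt hε')] at this
      linarith
    simp only [htdef]; linarith
  refine ⟨t, ⟨?_, fun i => lt_of_lt_of_le (hτ i) (ht_ge i)⟩, ω, ?_⟩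
  · rw [mem_ball, dist_pi_lt_iff hε]
    intro i
    rw [Real.dist_eq, abs_lt]
    constructor
    · linarith [ht_ge i]
    · have := ht_lt i; linarith
  · funext i
    have hωt : ω * t i = -(Complex.arg (z i)) + 2 * Real.pi * n i := by
      simp only [htdef, hadef, hωdef]
      field_simp
    have hcast : (-(Complex.I * (ω:ℂ) * (t i : ℂ)) : ℂ)
        = (Complex.arg (z i) : ℂ) * Complex.I + ((-(n i) : ℤ) : ℂ) * (2 * (Real.pi : ℂ) * Complex.I) := by
      have : (Complex.I * (ω:ℂ) * (t i : ℂ)) = Complex.I * ((ω * t i : ℝ) : ℂ) := by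
        push_cast; ring
      rw [this, hωt]
      push_cast
      ring
    rw [hcast, Complex.exp_add, Complex.exp_int_mul_two_pi_mul_I, mul_one]
    have := Complex.norm_mul_exp_arg_mul_I (z i)
    rw [hz i] at this
    simpa using this

/-- For `f(τ) = max(g(τ), sup_{ω} F(e^{-iωτ₁},…,e^{-iωτₘ}))` with `g` and `F`
continuous, the strong value of `f` equals `max(sg(τ), max_{torus} F)`, and since
the strong value of the continuous `g` equals `g`, it also equals
`max(g(τ), max_{torus} F)`. -/
theorem strongVal_max_formula {m : ℕ} (g : (Fin m → ℝ) → ℝ)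
    (hg : ContinuousOn g (posDelays m)) (c : ℝ)
    (F : (Fin m → ℂ) → ℝ) (hF : Continuous F)
    (f : (Fin m → ℝ) → ℝ)
    (hf : ∀ τ, f τ =
      max (g τ) (⨆ ω : ℝ, F (fun i => Complex.exp (-(Complex.I * ω * τ i))))) :
    ∀ τ ∈ posDelays m,
      strongVal f τ = max (strongVal g τ) (sSup (F '' torus m)) ∧
      (strongVal g τ = g τ → strongVal f τ = max (g τ) (sSup (F '' torus m))) := by
  intro τ hτ
  set M : ℝ := sSup (F '' torus m) with hMdef
  -- posDelays is open
  have hPopen : IsOpen (posDelays m) := by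
    have : posDelays m = Set.pi univ (fun _ => Ioi (0:ℝ)) := by
      ext x; simp [posDelays, Set.mem_pi]
    rw [this]
    exact isOpen_set_pi finite_univ (fun _ _ => isOpen_Ioi)
  have hgc : ContinuousAt g τ := hg.continuousAt (hPopen.mem_nhds hτ)
  -- torus is compact and nonempty
  have htc : IsCompact (torus m) := by
    have : torus m = Set.pi univ (fun _ => Metric.sphere (0:ℂ) 1) := by
      ext x; simp [torus, Set.mem_pi, Complex.dist_eq]
    rw [this]
    exact isCompact_univ_pi (fun _ => isCompact_sphere _ _)
  have htne : (torus m).Nonempty := ⟨fun _ => 1, fun i => by simp [torus]⟩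
  have hbdd : BddAbove (F '' torus m) := (htc.image hF).bddAbove
  -- points on the orbit are on the torus
  have habs : ∀ (ω : ℝ) (t : Fin m → ℝ),
      (fun i => Complex.exp (-(Complex.I * ω * t i))) ∈ torus m := by
    intro ω t i
    rw [Complex.norm_exp]; simp
  have hSle : ∀ t : Fin m → ℝ,
      (⨆ ω : ℝ, F (fun i => Complex.exp (-(Complex.I * ω * t i)))) ≤ M :=
    fun t => ciSup_le (fun ω => le_csSup hbdd ⟨_, habs ω t, rfl⟩)
  have hfle : ∀ t, f t ≤ max (g t) M := by
    intro t; rw [hf t]; exact max_le_max le_rfl (hSle t)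
  -- choose a neighborhood where g is bounded: ∀ δ>0, ∃ ε₀ ...
  have hgnear : ∀ δ > (0:ℝ), ∃ ε₀ > (0:ℝ), ball τ ε₀ ⊆ posDelays m ∧
      ∀ t ∈ ball τ ε₀, g t ≤ g τ + δ := by
    intro δ hδ
    obtain ⟨ε₁, hε₁, hball⟩ := Metric.isOpen_iff.1 hPopen τ hτ
    obtain ⟨ε₂, hε₂, hcont⟩ := Metric.continuousAt_iff.1 hgc δ hδ
    refine ⟨min ε₁ ε₂, lt_min hε₁ hε₂, ?_, ?_⟩
    · exact fun x hx => hball (mem_ball.2 (lt_of_lt_of_le (mem_ball.1 hx) (min_le_left _ _)))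
    · intro t ht
      have := hcont (lt_of_lt_of_le (mem_ball.1 ht) (min_le_right _ _))
      rw [Real.dist_eq, abs_lt] at this
      linarith [this.2]
  -- the M lower bound for the sSup of f over any small ball
  have hMle : ∀ ε > (0:ℝ), BddAbove (f '' (ball τ ε ∩ posDelays m)) →
      M ≤ sSup (f '' (ball τ ε ∩ posDelays m)) := by
    intro ε hε hbd
    apply csSup_le (htne.image F)
    rintro y ⟨z, hz, rfl⟩
    obtain ⟨t, htmem, ω, hωz⟩ := torus_point_hit τ hτ z hz ε hε
    have hbr : BddAbove (range fun ω' : ℝ => F (fun i => Complex.exp (-(Complex.I * ω' * t i)))) := by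
      refine ⟨M, ?_⟩
      rintro _ ⟨ω', rfl⟩
      exact le_csSup hbdd ⟨_, habs ω' t, rfl⟩
    have h1 : F z ≤ f t := by
      rw [hf t]
      refine le_trans ?_ (le_max_right _ _)
      have := le_ciSup hbr ω
      rwa [hωz] at this
    exact le_trans h1 (le_csSup hbd ⟨t, htmem, rfl⟩)
  -- main tendsto for f
  have keyf : Tendsto (fun ε : ℝ => sSup (f '' (ball τ ε ∩ posDelays m)))
      (nhdsWithin (0:ℝ) (Ioi 0)) (nhds (max (g τ) M)) := by
    apply aux_tendsto
    intro δ hδ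
    obtain ⟨ε₀, hε₀, hsub, hgb⟩ := hgnear δ hδ
    filter_upwards [Ioo_mem_nhdsGT_of_mem (Set.left_mem_Ico.2 hε₀)] with ε hε
    have hεpos : 0 < ε := hε.1
    have hεle : ε ≤ ε₀ := le_of_lt hε.2
    have hballsub : ball τ ε ⊆ ball τ ε₀ := ball_subset_ball hεle
    have hmemτ : τ ∈ ball τ ε ∩ posDelays m := ⟨mem_ball_self hεpos, hτ⟩
    have hbd : BddAbove (f '' (ball τ ε ∩ posDelays m)) := by
      refine ⟨max (g τ + δ) M, ?_⟩
      rintro _ ⟨t, ⟨ht1, _⟩, rfl⟩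
      exact le_trans (hfle t) (max_le_max (hgb t (hballsub ht1)) le_rfl)
    constructor
    · apply max_le
      · exact le_trans (by rw [hf τ]; exact le_max_left _ _) (le_csSup hbd ⟨τ, hmemτ, rfl⟩)
      · exact hMle ε hεpos hbd
    · have : sSup (f '' (ball τ ε ∩ posDelays m)) ≤ max (g τ + δ) M := by
        apply csSup_le ((Set.nonempty_of_mem hmemτ).image f)
        rintro _ ⟨t, ⟨ht1, _⟩, rfl⟩
        exact le_trans (hfle t) (max_le_max (hgb t (hballsub ht1)) le_rfl)
      refine le_trans this ?_
      apply max_le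
      · exact le_trans (by linarith [le_max_left (g τ) M] : g τ + δ ≤ max (g τ) M + δ) le_rfl
      · linarith [le_max_right (g τ) M]
  -- tendsto for g
  have keyg : Tendsto (fun ε : ℝ => sSup (g '' (ball τ ε ∩ posDelays m)))
      (nhdsWithin (0:ℝ) (Ioi 0)) (nhds (g τ)) := by
    apply aux_tendsto
    intro δ hδ
    obtain ⟨ε₀, hε₀, hsub, hgb⟩ := hgnear δ hδ
    filter_upwards [Ioo_mem_nhdsGT_of_mem (Set.left_mem_Ico.2 hε₀)] with ε hε
    have hεpos : 0 < ε := hε.1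
    have hballsub : ball τ ε ⊆ ball τ ε₀ := ball_subset_ball (le_of_lt hε.2)
    have hmemτ : τ ∈ ball τ ε ∩ posDelays m := ⟨mem_ball_self hεpos, hτ⟩
    have hbd : BddAbove (g '' (ball τ ε ∩ posDelays m)) := by
      refine ⟨g τ + δ, ?_⟩
      rintro _ ⟨t, ⟨ht1, _⟩, rfl⟩
      exact hgb t (hballsub ht1)
    constructor
    · exact le_csSup hbd ⟨τ, hmemτ, rfl⟩
    · apply csSup_le ((Set.nonempty_of_mem hmemτ).image g)
      rintro _ ⟨t, ⟨ht1, _⟩, rfl⟩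
      exact hgb t (hballsub ht1)
  have hsf : strongVal f τ = max (g τ) M := keyf.limUnder_eq
  have hsg : strongVal g τ = g τ := keyg.limUnder_eq
  rw [hsf, hsg]
  exact ⟨rfl, fun _ => rfl⟩
end
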